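/- Let F in M_{m,n}(ℂ) have rank r with singular value decomposition F = VΣW*, and let X be a partial isometry with F = X|F|. Then X = V [[I_r, 0],[0, S]] W* for some partial isometry S in M_{m-r,n-r}(ℂ), and conversely every such X satisfies F = X|F|. -/

import Mathlib

open Matrix BigOperators
open scoped ComplexOrder

noncomputable def sortDesc {q : ℕ} (x : Fin q → ℝ) : Fin q → ℝ :=
  fun i => (x ∘ Tuple.sort x) i.rev

noncomputable def sval {m n : ℕ} (F : Matrix (Fin m) (Fin n) ℂ) :
    Fin (min m n) → ℝ :=
  fun i => Real.sqrt (sortDesc (Matrix.posSemidef_conjTranspose_mul_self F).isHermitian.eigenvalues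
    ⟨i, lt_of_lt_of_le i.isLt (min_le_right m n)⟩)

def IsPartialIsometry {m n : ℕ} (X : Matrix (Fin m) (Fin n) ℂ) : Prop :=
  ∀ f ∈ (LinearMap.ker (Matrix.toEuclideanLin X))ᗮ, ‖Matrix.toEuclideanLin X f‖ = ‖f‖

noncomputable def matAbs {m n : ℕ} (F : Matrix (Fin m) (Fin n) ℂ) :
    Matrix (Fin n) (Fin n) ℂ :=
  (Matrix.posSemidef_conjTranspose_mul_self F).isHermitian.eigenvectorUnitary *
    Matrix.diagonal ((↑) ∘ Real.sqrt ∘ (Matrix.posSemidef_conjTranspose_mul_self F).isHermitian.eigenvalues : Fin n → ℂ) *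
    (star (Matrix.posSemidef_conjTranspose_mul_self F).isHermitian.eigenvectorUnitary : Matrix (Fin n) (Fin n) ℂ)

noncomputable def svdSigma {m n : ℕ} (F : Matrix (Fin m) (Fin n) ℂ) :
    Matrix (Fin m) (Fin n) ℂ :=
  fun i j => if h : (i : ℕ) = (j : ℕ) ∧ (i : ℕ) < min m n
    then (sval F ⟨i, h.2⟩ : ℂ) else 0

def IsSVD {m n : ℕ} (F : Matrix (Fin m) (Fin n) ℂ)
    (V : Matrix (Fin m) (Fin m) ℂ) (W : Matrix (Fin n) (Fin n) ℂ) : Prop :=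
  V ∈ Matrix.unitaryGroup (Fin m) ℂ ∧ W ∈ Matrix.unitaryGroup (Fin n) ℂ ∧
    F = V * svdSigma F * Wᴴ

def blockIso {m n : ℕ} (r : ℕ) (S : Matrix (Fin (m - r)) (Fin (n - r)) ℂ) :
    Matrix (Fin m) (Fin n) ℂ :=
  fun i j =>
    if (i : ℕ) < r ∧ (j : ℕ) < r then (if (i : ℕ) = (j : ℕ) then 1 else 0)
    else if h : r ≤ (i : ℕ) ∧ r ≤ (j : ℕ) then
      S ⟨(i : ℕ) - r, by have := i.isLt; omega⟩ ⟨(j : ℕ) - r, by have := j.isLt; omega⟩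
    else 0

def submajW {q : ℕ} (x y : Fin q → ℝ) : Prop :=
  ∀ k : ℕ, k ≤ q →
    (∑ i : Fin q, if (i : ℕ) < k then sortDesc x i else 0) ≤
      (∑ i : Fin q, if (i : ℕ) < k then sortDesc y i else 0)

structure SymmGauge (q : ℕ) where
  Φ : (Fin q → ℝ) → ℝ
  add_le : ∀ x y, Φ (x + y) ≤ Φ x + Φ y
  smul_eq : ∀ (c : ℝ) x, Φ (c • x) = |c| * Φ x
  eq_zero : ∀ x, Φ x = 0 → x = 0
  symm : ∀ (σ : Equiv.Perm (Fin q)) (ε : Fin q → ℝ) (x : Fin q → ℝ),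
    (∀ i, ε i = 1 ∨ ε i = -1) → Φ (fun i => ε i * x (σ i)) = Φ x

def SymmGauge.StrictlyConvex {q : ℕ} (G : SymmGauge q) : Prop :=
  ∀ x y, x ≠ y → G.Φ x = 1 → G.Φ y = 1 →
    ∀ t : ℝ, 0 < t → t < 1 → G.Φ (t • x + (1 - t) • y) < 1

noncomputable def gaugeNorm {m n : ℕ} (G : SymmGauge (min m n))
    (M : Matrix (Fin m) (Fin n) ℂ) : ℝ :=
  G.Φ (sval M)

noncomputable def projMat {m : ℕ} (S : Submodule ℂ (EuclideanSpace ℂ (Fin m))) :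
    Matrix (Fin m) (Fin m) ℂ :=
  Matrix.toEuclideanLin.symm (S.subtype ∘ₗ (S.orthogonalProjectionOnto).toLinearMap)

noncomputable def frobNorm {m n : ℕ} (M : Matrix (Fin m) (Fin n) ℂ) : ℝ :=
  Real.sqrt (∑ i, ∑ j, ‖M i j‖ ^ 2)

def IsMinPI {m n : ℕ} (G : SymmGauge (min m n)) (F : Matrix (Fin m) (Fin n) ℂ)
    (k : ℕ) (X : Matrix (Fin m) (Fin n) ℂ) : Prop :=
  IsPartialIsometry X ∧ X.rank = k ∧
    ∀ Y : Matrix (Fin m) (Fin n) ℂ, IsPartialIsometry Y → Y.rank = k →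
      gaugeNorm G (F - X) ≤ gaugeNorm G (F - Y)

def TriConstr {q : ℕ} (k : ℕ) (x : Fin q → ℝ) : Prop :=
  (∀ j, x j = -1 ∨ x j = 0 ∨ x j = 1) ∧ {j : Fin q | x j ≠ 0}.ncard = k

section Aux

open scoped InnerProductSpace

lemma pi_iff_lm {n m : ℕ} (T : EuclideanSpace ℂ (Fin n) →ₗ[ℂ] EuclideanSpace ℂ (Fin m)) :
    (∀ f ∈ (LinearMap.ker T)ᗮ, ‖T f‖ = ‖f‖) ↔
      T ∘ₗ LinearMap.adjoint T ∘ₗ T = T := by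
  have hadjK : ∀ v, LinearMap.adjoint T v ∈ (LinearMap.ker T)ᗮ := by
    intro v k hk
    rw [LinearMap.adjoint_inner_right, LinearMap.mem_ker.mp hk, inner_zero_left]
  constructor
  · intro h
    have hinner : ∀ g ∈ (LinearMap.ker T)ᗮ, ∀ g' ∈ (LinearMap.ker T)ᗮ,
        ⟪T g, T g'⟫_ℂ = ⟪g, g'⟫_ℂ := by
      intro g hg g' hg'
      have e1 : ‖T g + T g'‖ = ‖g + g'‖ := by
        rw [← map_add]; exact h _ (Submodule.add_mem _ hg hg')
      have e2 : ‖T g - T g'‖ = ‖g - g'‖ := by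
        rw [← map_sub]; exact h _ (Submodule.sub_mem _ hg hg')
      have e3 : ‖T g - (RCLike.I : ℂ) • T g'‖ = ‖g - (RCLike.I : ℂ) • g'‖ := by
        rw [← _root_.map_smul, ← map_sub]
        exact h _ (Submodule.sub_mem _ hg (Submodule.smul_mem _ _ hg'))
      have e4 : ‖T g + (RCLike.I : ℂ) • T g'‖ = ‖g + (RCLike.I : ℂ) • g'‖ := by
        rw [← _root_.map_smul, ← map_add]
        exact h _ (Submodule.add_mem _ hg (Submodule.smul_mem _ _ hg'))
      rw [inner_eq_sum_norm_sq_div_four, inner_eq_sum_norm_sq_div_four, e1, e2, e3, e4]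
    have key : ∀ g ∈ (LinearMap.ker T)ᗮ, LinearMap.adjoint T (T g) = g := by
      intro g hg
      have hu : LinearMap.adjoint T (T g) - g ∈ (LinearMap.ker T)ᗮ :=
        Submodule.sub_mem _ (hadjK _) hg
      have horth : ∀ g' ∈ (LinearMap.ker T)ᗮ, ⟪LinearMap.adjoint T (T g) - g, g'⟫_ℂ = 0 := by
        intro g' hg'
        rw [inner_sub_left, LinearMap.adjoint_inner_left, hinner g hg g' hg', sub_self]
      have h0 : ⟪LinearMap.adjoint T (T g) - g, LinearMap.adjoint T (T g) - g⟫_ℂ = 0 :=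
        horth _ hu
      rw [inner_self_eq_zero] at h0
      exact sub_eq_zero.mp h0
    ext f
    simp only [LinearMap.comp_apply]
    obtain ⟨k, hk, g, hg, rfl⟩ := Submodule.exists_add_mem_mem_orthogonal (K := LinearMap.ker T) f
    have hTf : T (k + g) = T g := by
      rw [map_add, LinearMap.mem_ker.mp hk, zero_add]
    rw [hTf, key _ hg]
  · intro hE f hf
    have hfix : LinearMap.adjoint T (T f) = f := by
      have hu : LinearMap.adjoint T (T f) - f ∈ (LinearMap.ker T)ᗮ :=
        Submodule.sub_mem _ (hadjK _) hf
      have hker : LinearMap.adjoint T (T f) - f ∈ LinearMap.ker T := by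
        rw [LinearMap.mem_ker, map_sub]
        have h2 := LinearMap.ext_iff.mp hE f
        simp only [LinearMap.comp_apply] at h2
        rw [h2, sub_self]
      have h0 : ⟪LinearMap.adjoint T (T f) - f, LinearMap.adjoint T (T f) - f⟫_ℂ = 0 :=
        hu _ hker
      rw [inner_self_eq_zero] at h0
      exact sub_eq_zero.mp h0
    have hsq : ‖T f‖ ^ 2 = ‖f‖ ^ 2 := by
      have h1 : ⟪T f, T f⟫_ℂ = ⟪f, f⟫_ℂ := by
        rw [← LinearMap.adjoint_inner_left, hfix]
      rw [inner_self_eq_norm_sq_to_K, inner_self_eq_norm_sq_to_K] at h1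
      exact_mod_cast h1
    have := congrArg Real.sqrt hsq
    rwa [Real.sqrt_sq (norm_nonneg _), Real.sqrt_sq (norm_nonneg _)] at this

end Aux


section Aux2

lemma toEuclideanLin_mul {m n p : ℕ} (A : Matrix (Fin m) (Fin n) ℂ)
    (B : Matrix (Fin n) (Fin p) ℂ) :
    Matrix.toEuclideanLin (A * B) = Matrix.toEuclideanLin A ∘ₗ Matrix.toEuclideanLin B := by
  apply LinearMap.ext
  intro v
  simp [Matrix.toEuclideanLin_apply, Matrix.mulVec_mulVec]

lemma pi_iff {m n : ℕ} (X : Matrix (Fin m) (Fin n) ℂ) :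
    IsPartialIsometry X ↔ X * Xᴴ * X = X := by
  have h1 : Matrix.toEuclideanLin (X * Xᴴ * X)
      = Matrix.toEuclideanLin X ∘ₗ
        LinearMap.adjoint (Matrix.toEuclideanLin X) ∘ₗ Matrix.toEuclideanLin X := by
    rw [toEuclideanLin_mul, toEuclideanLin_mul, Matrix.toEuclideanLin_conjTranspose_eq_adjoint,
      LinearMap.comp_assoc]
  have h2 := pi_iff_lm (Matrix.toEuclideanLin X)
  rw [← h1, (Matrix.toEuclideanLin (𝕜 := ℂ) (m := Fin m) (n := Fin n)).injective.eq_iff] at h2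
  exact h2

lemma sortDesc_perm {q : ℕ} (x : Fin q → ℝ) :
    ∃ σ : Equiv.Perm (Fin q), sortDesc x = x ∘ σ :=
  ⟨Fin.revPerm.trans (Tuple.sort x), rfl⟩

lemma sortDesc_antitone {q : ℕ} (x : Fin q → ℝ) : Antitone (sortDesc x) := by
  intro i j hij
  exact Tuple.monotone_sort x (Fin.rev_le_rev.mpr hij)

lemma card_ne_zero_sortDesc {q : ℕ} (x : Fin q → ℝ) :
    Fintype.card {i // sortDesc x i ≠ 0} = Fintype.card {i // x i ≠ 0} := by
  obtain ⟨σ, hσ⟩ := sortDesc_perm x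
  rw [hσ]
  exact Fintype.card_congr (σ.subtypeEquiv fun i => Iff.rfl)

lemma sorted_support {q r : ℕ} (y : Fin q → ℝ) (hmono : Antitone y) (hpos : ∀ i, 0 ≤ y i)
    (hcard : Fintype.card {i // y i ≠ 0} = r) (j : Fin q) : y j ≠ 0 ↔ (j : ℕ) < r := by
  classical
  have hcard' : (Finset.univ.filter fun i => y i ≠ 0).card = r := by
    rw [← hcard, Fintype.card_subtype]
  constructor
  · intro hj
    have hsub : Finset.Iic j ⊆ Finset.univ.filter fun i => y i ≠ 0 := by
      intro i hi
      rw [Finset.mem_Iic] at hi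
      refine Finset.mem_filter.mpr ⟨Finset.mem_univ _, ?_⟩
      have hle : y j ≤ y i := hmono hi
      have hjpos : 0 < y j := lt_of_le_of_ne (hpos j) (Ne.symm hj)
      exact ne_of_gt (lt_of_lt_of_le hjpos hle)
    have := Finset.card_le_card hsub
    rw [Fin.card_Iic, hcard'] at this
    omega
  · intro hjr hj0
    have hsub : (Finset.univ.filter fun i => y i ≠ 0) ⊆ Finset.Iio j := by
      intro i hi
      rw [Finset.mem_Iio]
      by_contra hij
      push_neg at hij
      have hne := (Finset.mem_filter.mp hi).2
      have hpos' : 0 < y i := lt_of_le_of_ne (hpos i) (Ne.symm hne)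
      have hle : y i ≤ 0 := hj0 ▸ hmono hij
      linarith
    have := Finset.card_le_card hsub
    rw [Fin.card_Iio, hcard'] at this
    omega

lemma blockIso_eq {m n : ℕ} {r : ℕ} (hrm : r ≤ m) (hrn : r ≤ n)
    (S : Matrix (Fin (m - r)) (Fin (n - r)) ℂ) :
    blockIso r S = (Matrix.fromBlocks 1 0 0 S).submatrix
      (finSumFinEquiv.trans (finCongr (Nat.add_sub_cancel' hrm))).symm
      (finSumFinEquiv.trans (finCongr (Nat.add_sub_cancel' hrn))).symm := by
  have key : ∀ (a : Fin r ⊕ Fin (m - r)) (b : Fin r ⊕ Fin (n - r)),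
      blockIso r S ((finSumFinEquiv.trans (finCongr (Nat.add_sub_cancel' hrm))) a)
        ((finSumFinEquiv.trans (finCongr (Nat.add_sub_cancel' hrn))) b)
      = Matrix.fromBlocks 1 0 0 S a b := by
    rintro (a | a) (b | b) <;>
      simp only [Equiv.trans_apply, finCongr_apply, finSumFinEquiv_apply_left,
        finSumFinEquiv_apply_right, blockIso, Matrix.fromBlocks, Matrix.of_apply,
        Sum.elim_inl, Sum.elim_inr, Fin.coe_cast, Fin.coe_castAdd, Fin.coe_natAdd,
        Matrix.one_apply, Matrix.zero_apply]
    · rw [if_pos ⟨a.isLt, b.isLt⟩]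
      by_cases hab : (a : ℕ) = (b : ℕ)
      · rw [if_pos hab, if_pos (Fin.ext hab)]
      · rw [if_neg hab, if_neg (fun h => hab (congrArg Fin.val h))]
    · rw [if_neg (by omega), dif_neg (by omega)]
    · rw [if_neg (by push_neg; intro h; omega), dif_neg (by omega)]
    · rw [if_neg (by omega), dif_pos ⟨by omega, by omega⟩]
      congr 1 <;> exact Fin.ext (by simp only [Fin.val_mk]; omega)
  ext i j
  rw [Matrix.submatrix_apply,
    ← key ((finSumFinEquiv.trans (finCongr (Nat.add_sub_cancel' hrm))).symm i)
      ((finSumFinEquiv.trans (finCongr (Nat.add_sub_cancel' hrn))).symm j),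
    Equiv.apply_symm_apply, Equiv.apply_symm_apply]

end Aux2


lemma blockIso_triple {m n : ℕ} {r : ℕ} (hrm : r ≤ m) (hrn : r ≤ n)
    (S : Matrix (Fin (m - r)) (Fin (n - r)) ℂ) :
    blockIso r S * (blockIso r S)ᴴ * blockIso r S = blockIso r (S * Sᴴ * S) := by
  rw [blockIso_eq hrm hrn S, blockIso_eq hrm hrn (S * Sᴴ * S),
    Matrix.conjTranspose_submatrix, Matrix.submatrix_mul_equiv, Matrix.submatrix_mul_equiv]
  congr 1
  simp [Matrix.fromBlocks_conjTranspose, Matrix.fromBlocks_multiply]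

lemma blockIso_inj {m n : ℕ} {r : ℕ} (hrm : r ≤ m) (hrn : r ≤ n)
    {S T : Matrix (Fin (m - r)) (Fin (n - r)) ℂ}
    (h : blockIso r S = blockIso r T) : S = T := by
  rw [blockIso_eq hrm hrn S, blockIso_eq hrm hrn T] at h
  have h2 := congrArg (fun M : Matrix (Fin m) (Fin n) ℂ =>
    M.submatrix (finSumFinEquiv.trans (finCongr (Nat.add_sub_cancel' hrm)))
      (finSumFinEquiv.trans (finCongr (Nat.add_sub_cancel' hrn)))) h
  simp only [Matrix.submatrix_submatrix, Equiv.symm_comp_self, Matrix.submatrix_id_id] at h2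
  have h3 := congrArg Matrix.toBlocks₂₂ h2
  simpa [Matrix.toBlocks_fromBlocks₂₂] using h3


open scoped MatrixOrder in
lemma matAbs_unique {m n : ℕ} (F : Matrix (Fin m) (Fin n) ℂ) (B : Matrix (Fin n) (Fin n) ℂ)
    (hB : B.PosSemidef) (h : B ^ 2 = Fᴴ * F) : matAbs F = B := by
  have hA := Matrix.posSemidef_conjTranspose_mul_self F
  have e1 : matAbs F = cfc Real.sqrt (Fᴴ * F) := by
    rw [hA.1.cfc_eq]
    simp [matAbs, Matrix.IsHermitian.cfc, Unitary.conjStarAlgAut_apply]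
  rw [e1, ← cfcₙ_eq_cfc, ← CFC.sqrt_eq_real_sqrt _ hA.nonneg]
  exact CFC.sqrt_unique (by rw [← h, sq]) hB.nonneg

set_option maxHeartbeats 1000000 in
theorem stmt3 {m n r : ℕ} (F X : Matrix (Fin m) (Fin n) ℂ)
    (V : Matrix (Fin m) (Fin m) ℂ) (W : Matrix (Fin n) (Fin n) ℂ)
    (hr : F.rank = r) (hSVD : IsSVD F V W) :
    (IsPartialIsometry X ∧ F = X * matAbs F) ↔
      ∃ S : Matrix (Fin (m - r)) (Fin (n - r)) ℂ,
        IsPartialIsometry S ∧ X = V * blockIso r S * Wᴴ := by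
  classical
  obtain ⟨hV, hW, hF⟩ := hSVD
  have hVl : Vᴴ * V = 1 := by
    simpa only [Matrix.star_eq_conjTranspose] using Matrix.mem_unitaryGroup_iff'.mp hV
  have hVr : V * Vᴴ = 1 := by
    simpa only [Matrix.star_eq_conjTranspose] using Matrix.mem_unitaryGroup_iff.mp hV
  have hWl : Wᴴ * W = 1 := by
    simpa only [Matrix.star_eq_conjTranspose] using Matrix.mem_unitaryGroup_iff'.mp hW
  have hWr : W * Wᴴ = 1 := by
    simpa only [Matrix.star_eq_conjTranspose] using Matrix.mem_unitaryGroup_iff.mp hW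
  have hrm : r ≤ m := hr ▸ F.rank_le_height
  have hrn : r ≤ n := hr ▸ F.rank_le_width
  have hrmin : r ≤ min m n := le_min hrm hrn
  set y : Fin n → ℝ :=
    sortDesc (Matrix.posSemidef_conjTranspose_mul_self F).isHermitian.eigenvalues with hy
  have hy0 : ∀ j, 0 ≤ y j := by
    intro j
    obtain ⟨σ, hσ⟩ := sortDesc_perm
      (Matrix.posSemidef_conjTranspose_mul_self F).isHermitian.eigenvalues
    rw [hy, hσ]
    exact (Matrix.posSemidef_conjTranspose_mul_self F).eigenvalues_nonneg _
  have hyr : ∀ j : Fin n, y j ≠ 0 ↔ (j : ℕ) < r := by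
    apply sorted_support y (sortDesc_antitone _) hy0
    rw [hy, card_ne_zero_sortDesc,
      ← Matrix.IsHermitian.rank_eq_card_non_zero_eigs, Matrix.rank_conjTranspose_mul_self, hr]
  have hy0' : ∀ j : Fin n, ¬ ((j : ℕ) < r) → y j = 0 := by
    intro j h
    by_contra h2
    exact h ((hyr j).mp h2)
  have hSigIf : ∀ (i : Fin m) (j : Fin n),
      svdSigma F i j = if (i : ℕ) = (j : ℕ) then ((Real.sqrt (y j) : ℝ) : ℂ) else 0 := by
    intro i j
    simp only [svdSigma]
    by_cases hij : (i : ℕ) = (j : ℕ)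
    · rw [if_pos hij]
      by_cases h2 : (i : ℕ) < min m n
      · rw [dif_pos ⟨hij, h2⟩]
        norm_cast
        simp only [sval]
        exact congrArg Real.sqrt (congrArg y (Fin.ext hij))
      · rw [dif_neg (fun h => h2 h.2), hy0' j (by omega), Real.sqrt_zero,
          Complex.ofReal_zero]
    · rw [if_neg hij, dif_neg (fun h => hij h.1)]
  set D : Matrix (Fin n) (Fin n) ℂ := Matrix.diagonal (fun j => (Real.sqrt (y j) : ℂ)) with hD
  have hSTS : (svdSigma F)ᴴ * svdSigma F = Matrix.diagonal (fun j => ((y j : ℝ) : ℂ)) := by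
    ext j k
    rw [Matrix.mul_apply, Matrix.diagonal_apply]
    by_cases hjk : j = k
    · subst hjk
      rw [if_pos rfl]
      by_cases hjm : (j : ℕ) < m
      · rw [Finset.sum_eq_single (⟨(j : ℕ), hjm⟩ : Fin m)]
        · rw [Matrix.conjTranspose_apply, hSigIf, if_pos rfl]
          rw [Complex.star_def, Complex.conj_ofReal, ← Complex.ofReal_mul,
            Real.mul_self_sqrt (hy0 j)]
        · intro b _ hb
          rw [Matrix.conjTranspose_apply, hSigIf, if_neg (fun h => hb (Fin.ext h)),
            star_zero, zero_mul]
        · intro h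
          exact absurd (Finset.mem_univ _) h
      · rw [hy0' j (by omega), Complex.ofReal_zero, Finset.sum_eq_zero]
        intro i _
        rw [Matrix.conjTranspose_apply, hSigIf, if_neg (by omega), star_zero, zero_mul]
    · rw [if_neg hjk, Finset.sum_eq_zero]
      intro i _
      by_cases h1 : (i : ℕ) = (j : ℕ)
      · rw [hSigIf i k, if_neg (fun h => hjk (Fin.ext (h1 ▸ h))), mul_zero]
      · rw [Matrix.conjTranspose_apply, hSigIf, if_neg h1, star_zero, zero_mul]
  have hAbs : matAbs F = W * D * Wᴴ := by
    have hDpsd : (W * D * Wᴴ).PosSemidef := by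
      apply Matrix.PosSemidef.mul_mul_conjTranspose_same
      refine Matrix.posSemidef_diagonal_iff.mpr fun j => ?_
      rw [Complex.zero_le_real]
      exact Real.sqrt_nonneg _
    have hDD : D * D = Matrix.diagonal (fun j => ((y j : ℝ) : ℂ)) := by
      rw [hD, Matrix.diagonal_mul_diagonal]
      refine congrArg Matrix.diagonal (funext fun j => ?_)
      rw [← Complex.ofReal_mul, Real.mul_self_sqrt (hy0 j)]
    have hsq : (W * D * Wᴴ) ^ 2 = Fᴴ * F := by
      rw [pow_two, hF]
      simp only [Matrix.conjTranspose_mul, Matrix.conjTranspose_conjTranspose]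
      simp only [← Matrix.mul_assoc]
      rw [Matrix.mul_assoc _ Wᴴ W, hWl, Matrix.mul_one,
        Matrix.mul_assoc _ Vᴴ V, hVl, Matrix.mul_one]
      rw [Matrix.mul_assoc W D D, hDD, ← hSTS]
      simp only [Matrix.mul_assoc]
    exact matAbs_unique F _ hDpsd hsq
  have hYdef : ∀ Z : Matrix (Fin m) (Fin n) ℂ,
      (F = Z * matAbs F) ↔ svdSigma F = Vᴴ * Z * W * D := by
    intro Z
    rw [hAbs]
    constructor
    · intro h
      have h2 : Vᴴ * (V * svdSigma F * Wᴴ) * W = Vᴴ * (Z * (W * D * Wᴴ)) * W := by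
        rw [← hF, h]
      simp only [← Matrix.mul_assoc] at h2
      rw [hVl, Matrix.one_mul, Matrix.mul_assoc _ Wᴴ W, Matrix.mul_assoc _ Wᴴ W, hWl,
        Matrix.mul_one, Matrix.mul_one] at h2
      exact h2
    · intro h
      rw [hF, h]
      simp only [← Matrix.mul_assoc]
      rw [hVr, Matrix.one_mul]
  have hcol : ∀ Z : Matrix (Fin m) (Fin n) ℂ,
      svdSigma F = Z * D ↔ ∀ (i : Fin m) (j : Fin n), (j : ℕ) < r →
        Z i j = if (i : ℕ) = (j : ℕ) then 1 else 0 := by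
    intro Z
    constructor
    · intro h i j hjr
      have h2 := congrFun (congrFun h i) j
      rw [hSigIf, hD, Matrix.mul_diagonal] at h2
      have hd : ((Real.sqrt (y j) : ℝ) : ℂ) ≠ 0 := by
        rw [Complex.ofReal_ne_zero]
        exact Real.sqrt_ne_zero'.mpr (lt_of_le_of_ne (hy0 j) (Ne.symm ((hyr j).mpr hjr)))
      by_cases hij : (i : ℕ) = (j : ℕ)
      · rw [if_pos hij] at h2 ⊢
        have : (1 : ℂ) * (Real.sqrt (y j) : ℂ) = Z i j * (Real.sqrt (y j) : ℂ) := by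
          rw [one_mul]; exact h2
        exact (mul_right_cancel₀ hd this).symm
      · rw [if_neg hij] at h2 ⊢
        rcases mul_eq_zero.mp h2.symm with h3 | h3
        · exact h3
        · exact absurd h3 hd
    · intro h
      ext i j
      rw [hSigIf, hD, Matrix.mul_diagonal]
      by_cases hjr : (j : ℕ) < r
      · rw [h i j hjr]
        by_cases hij : (i : ℕ) = (j : ℕ)
        · rw [if_pos hij, if_pos hij, one_mul]
        · rw [if_neg hij, if_neg hij, zero_mul]
      · rw [hy0' j hjr, Real.sqrt_zero, Complex.ofReal_zero, mul_zero]
        simp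
  have hconj3 : ∀ Z : Matrix (Fin m) (Fin n) ℂ,
      (V * Z * Wᴴ) * (V * Z * Wᴴ)ᴴ * (V * Z * Wᴴ) = V * (Z * Zᴴ * Z) * Wᴴ := by
    intro Z
    simp only [Matrix.conjTranspose_mul, Matrix.conjTranspose_conjTranspose]
    simp only [← Matrix.mul_assoc]
    rw [Matrix.mul_assoc _ Wᴴ W, hWl, Matrix.mul_one,
      Matrix.mul_assoc _ Vᴴ V, hVl, Matrix.mul_one]
  constructor
  · rintro ⟨hPI, hFX⟩
    set Y : Matrix (Fin m) (Fin n) ℂ := Vᴴ * X * W with hYd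
    have h1 : svdSigma F = Y * D := by rw [hYd]; exact (hYdef X).mp hFX
    have hcolY : ∀ (i : Fin m) (j : Fin n), (j : ℕ) < r →
        Y i j = if (i : ℕ) = (j : ℕ) then 1 else 0 := (hcol Y).mp h1
    have hY3 : Y * Yᴴ * Y = Y := by
      have hX3 : X * Xᴴ * X = X := (pi_iff X).mp hPI
      rw [hYd]
      simp only [Matrix.conjTranspose_mul, Matrix.conjTranspose_conjTranspose]
      simp only [← Matrix.mul_assoc]
      rw [Matrix.mul_assoc _ W Wᴴ, hWr, Matrix.mul_one,
        Matrix.mul_assoc _ V Vᴴ, hVr, Matrix.mul_one]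
      rw [Matrix.mul_assoc Vᴴ X Xᴴ, Matrix.mul_assoc Vᴴ (X * Xᴴ) X, hX3]
    set Q : Matrix (Fin n) (Fin n) ℂ := Yᴴ * Y with hQd
    have hQherm : ∀ a b : Fin n, Q b a = star (Q a b) := by
      intro a b
      have hQH : Qᴴ = Q := by
        rw [hQd, Matrix.conjTranspose_mul, Matrix.conjTranspose_conjTranspose]
      conv_lhs => rw [← hQH]
      rw [Matrix.conjTranspose_apply]
    have hQ2 : Q * Q = Q := by
      rw [hQd]
      calc Yᴴ * Y * (Yᴴ * Y) = Yᴴ * (Y * Yᴴ * Y) := by simp only [Matrix.mul_assoc]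
        _ = Yᴴ * Y := by rw [hY3]
    have hQrow : ∀ (i : Fin m) (j : Fin n), (i : ℕ) < r →
        Y i j = if (i : ℕ) = (j : ℕ) then 1 else 0 := by
      intro i j hir
      set an : Fin n := ⟨(i : ℕ), lt_of_lt_of_le hir hrn⟩ with han
      have hanv : (an : ℕ) = (i : ℕ) := rfl
      have hQY : ∀ b : Fin n, Q an b = Y i b := by
        intro b
        rw [hQd, Matrix.mul_apply]
        rw [Finset.sum_eq_single i]
        · rw [Matrix.conjTranspose_apply, hcolY i an (by rw [hanv]; exact hir),
            if_pos hanv.symm, star_one, one_mul]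
        · intro c _ hc
          rw [Matrix.conjTranspose_apply, hcolY c an (by rw [hanv]; exact hir),
            if_neg (fun h => hc (Fin.ext (h.trans hanv))), star_zero, zero_mul]
        · intro h; exact absurd (Finset.mem_univ i) h
      have hQaa : Q an an = 1 := by
        rw [hQY an, hcolY i an (by rw [hanv]; exact hir), if_pos hanv.symm]
      have hQoff : ∀ b : Fin n, b ≠ an → Q an b = 0 := by
        intro b hb
        have h1' : (1 : ℂ) = ∑ c : Fin n, Q an c * Q c an := by
          rw [← Matrix.mul_apply, hQ2, hQaa]
        have h2' : (1 : ℝ) = ∑ c : Fin n, Complex.normSq (Q an c) := by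
          have he : ∑ c : Fin n, Q an c * Q c an
              = ((∑ c : Fin n, Complex.normSq (Q an c) : ℝ) : ℂ) := by
            push_cast
            refine Finset.sum_congr rfl fun c _ => ?_
            rw [hQherm an c, Complex.star_def, Complex.mul_conj]
          rw [he] at h1'
          exact_mod_cast h1'
        have h3' : ∑ c ∈ Finset.univ.erase an, Complex.normSq (Q an c) = 0 := by
          have h4 := Finset.add_sum_erase Finset.univ
            (fun c => Complex.normSq (Q an c)) (Finset.mem_univ an)
          simp only [hQaa, Complex.normSq_one] at h4
          rw [← h2'] at h4
          linarith
        have h5 := (Finset.sum_eq_zero_iff_of_nonneg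
          (fun c _ => Complex.normSq_nonneg (Q an c))).mp h3' b
          (Finset.mem_erase.mpr ⟨hb, Finset.mem_univ b⟩)
        exact Complex.normSq_eq_zero.mp h5
      by_cases hij : (i : ℕ) = (j : ℕ)
      · rw [if_pos hij, ← hQY j]
        have hja : j = an := Fin.ext (by rw [hanv]; exact hij.symm)
        rw [hja, hQaa]
      · rw [if_neg hij, ← hQY j]
        exact hQoff j (fun h => hij (by rw [h]))
    set S : Matrix (Fin (m - r)) (Fin (n - r)) ℂ :=
      fun p q => Y ⟨r + (p : ℕ), by have := p.isLt; omega⟩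
        ⟨r + (q : ℕ), by have := q.isLt; omega⟩ with hSd
    have hSapp : ∀ (p : Fin (m - r)) (q : Fin (n - r)),
        S p q = Y ⟨r + (p : ℕ), by have := p.isLt; omega⟩
          ⟨r + (q : ℕ), by have := q.isLt; omega⟩ := fun p q => rfl
    have hYB : Y = blockIso r S := by
      ext i j
      simp only [blockIso]
      by_cases h1' : (i : ℕ) < r ∧ (j : ℕ) < r
      · rw [if_pos h1']
        exact hQrow i j h1'.1
      · rw [if_neg h1']
        by_cases h2' : r ≤ (i : ℕ) ∧ r ≤ (j : ℕ)
        · rw [dif_pos h2', hSapp]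
          congr 1 <;> exact Fin.ext (by simp only [Fin.val_mk]; omega)
        · rw [dif_neg h2']
          rcases Nat.lt_or_ge (i : ℕ) r with hi | hi
          · have hj : ¬ (j : ℕ) < r := fun hj => h1' ⟨hi, hj⟩
            rw [hQrow i j hi, if_neg (by omega)]
          · have hj : (j : ℕ) < r := by
              by_contra hj
              exact h2' ⟨hi, Nat.le_of_not_lt hj⟩
            rw [hcolY i j hj, if_neg (by omega)]
    have hS3 : S * Sᴴ * S = S := by
      apply blockIso_inj hrm hrn
      rw [← blockIso_triple hrm hrn S, ← hYB, hY3, hYB]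
    refine ⟨S, (pi_iff S).mpr hS3, ?_⟩
    rw [← hYB, hYd]
    simp only [← Matrix.mul_assoc]
    rw [hVr, Matrix.one_mul, Matrix.mul_assoc X W Wᴴ, hWr, Matrix.mul_one]
  · rintro ⟨S, hSPI, hXeq⟩
    have hS3 : S * Sᴴ * S = S := (pi_iff S).mp hSPI
    have hXPI : IsPartialIsometry X := by
      rw [pi_iff, hXeq, hconj3 (blockIso r S), blockIso_triple hrm hrn S, hS3]
    refine ⟨hXPI, ?_⟩
    rw [hYdef X]
    have hYis : Vᴴ * X * W = blockIso r S := by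
      rw [hXeq]
      simp only [← Matrix.mul_assoc]
      rw [hVl, Matrix.one_mul, Matrix.mul_assoc _ Wᴴ W, hWl, Matrix.mul_one]
    rw [hYis, hcol]
    intro i j hjr
    simp only [blockIso]
    by_cases h1' : (i : ℕ) < r
    · rw [if_pos ⟨h1', hjr⟩]
    · rw [if_neg (fun h => h1' h.1),
        dif_neg (fun h => absurd hjr (Nat.not_lt.mpr h.2)), if_neg (by omega)]
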